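/- Let N ≥ 4 and let P(N,d,k) denote the probability that a hypergeometric Hyp(N,d,k) random variable is odd. Then for all 1 ≤ d ≤ N-1 and 2 ≤ k ≤ N-1, d(N-d)/(N(N-1)) ≤ P(N,d,k) ≤ 1 - d(N-d)/(N(N-1)). -/

import Mathlib

open Finset

/-- Probability that a hypergeometric `Hyp(N, d, k)` random variable is odd. -/
noncomputable def POdd (N d k : ℕ) : ℝ :=
  ∑ x ∈ Finset.Icc 1 k,
    if Odd x then (Nat.choose d x * Nat.choose (N - d) (k - x) : ℝ) / Nat.choose N k else 0

noncomputable def pterm (N d k x : ℕ) : ℝ :=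
  (Nat.choose d x : ℝ) * (Nat.choose (N - d) (k - x)) / (Nat.choose N k)

lemma POdd_eq (N d k : ℕ) :
    POdd N d k = ∑ x ∈ Icc 0 k, if Odd x then pterm N d k x else 0 := by
  rw [POdd, show Icc 0 k = insert 0 (Icc 1 k) from by ext x; simp; omega,
    Finset.sum_insert (by simp)]
  simp [pterm]

lemma sum_pterm (N d k : ℕ) (hd : d ≤ N) (hk : k ≤ N) :
    ∑ x ∈ Icc 0 k, pterm N d k x = 1 := by
  have h : ∑ x ∈ Icc 0 k, (d.choose x * (N - d).choose (k - x)) = N.choose k := by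
    have h2 := Nat.add_choose_eq d (N - d) k
    rw [Nat.add_sub_cancel' hd] at h2
    rw [h2, Finset.Nat.sum_antidiagonal_eq_sum_range_succ_mk,
      show Icc 0 k = range (k+1) from by ext x; simp]
  have hC : (0:ℝ) < N.choose k := by exact_mod_cast Nat.choose_pos hk
  rw [show (∑ x ∈ Icc 0 k, pterm N d k x)
      = (∑ x ∈ Icc 0 k, ((d.choose x * (N - d).choose (k - x) : ℕ) : ℝ)) / N.choose k from by
    rw [Finset.sum_div]; apply Finset.sum_congr rfl; intro x _; rw [pterm]; push_cast; ring]
  rw [← Nat.cast_sum, h, div_self hC.ne']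

lemma POdd_nonneg (N d k : ℕ) : 0 ≤ POdd N d k := by
  rw [POdd_eq]
  apply Finset.sum_nonneg
  intro x _
  split
  · apply div_nonneg <;> positivity
  · exact le_refl 0

lemma sum_even (N d k : ℕ) (hd : d ≤ N) (hk : k ≤ N) :
    ∑ x ∈ Icc 0 k, (if ¬ Odd x then pterm N d k x else 0) = 1 - POdd N d k := by
  have h := sum_pterm N d k hd hk
  rw [POdd_eq]
  have : ∀ x ∈ Icc 0 k, (if Odd x then pterm N d k x else 0)
      + (if ¬ Odd x then pterm N d k x else 0) = pterm N d k x := by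
    intro x _; by_cases hx : Odd x <;> simp [hx]
  have h2 := Finset.sum_congr rfl this
  rw [Finset.sum_add_distrib] at h2
  linarith [h2.trans h]

lemma POdd_le_one (N d k : ℕ) (hd : d ≤ N) (hk : k ≤ N) : POdd N d k ≤ 1 := by
  have h := sum_even N d k hd hk
  have h2 : 0 ≤ ∑ x ∈ Icc 0 k, (if ¬ Odd x then pterm N d k x else 0) := by
    apply Finset.sum_nonneg; intro x _; split
    · apply div_nonneg <;> positivity
    · exact le_refl 0
  linarith


lemma mulchoose (n j : ℕ) (hn : 1 ≤ n) (hj : 1 ≤ j) :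
    n * (n-1).choose (j-1) = j * n.choose j := by
  obtain ⟨n, rfl⟩ : ∃ m, n = m + 1 := ⟨n-1, by omega⟩
  obtain ⟨j, rfl⟩ : ∃ m, j = m + 1 := ⟨j-1, by omega⟩
  simp only [Nat.add_sub_cancel]
  rw [Nat.mul_comm (j+1)]
  exact Nat.add_one_mul_choose_eq n j

lemma key_nat (N d k x : ℕ) (hd : 1 ≤ d) (hdN : d + 1 ≤ N) (hx : 1 ≤ x) (hxk : x ≤ k) :
    k * (d.choose x * (N-d).choose (k-x)) =
      d * ((d-1).choose (x-1) * (N-d).choose (k-x)) +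
      (N-d) * (if x < k then d.choose x * (N-d-1).choose (k-x-1) else 0) := by
  have h1 : d * (d-1).choose (x-1) = x * d.choose x := mulchoose d x hd hx
  by_cases hlt : x < k
  · have h2 : (N-d) * (N-d-1).choose (k-x-1) = (k-x) * (N-d).choose (k-x) :=
      mulchoose (N-d) (k-x) (by omega) (by omega)
    simp only [hlt, if_pos]
    calc k * (d.choose x * (N-d).choose (k-x))
        = x * (d.choose x * (N-d).choose (k-x)) + (k-x) * (d.choose x * (N-d).choose (k-x)) := by
          rw [← Nat.add_mul]; congr 1; omega
      _ = d * ((d-1).choose (x-1) * (N-d).choose (k-x))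
          + (N-d) * (d.choose x * (N-d-1).choose (k-x-1)) := by
          rw [← Nat.mul_assoc, ← h1, Nat.mul_assoc]
          congr 1
          rw [Nat.mul_left_comm (N-d) (d.choose x), h2]; ring
  · have hxek : x = k := by omega
    subst hxek
    simp only [lt_irrefl, if_false, Nat.mul_zero, Nat.add_zero]
    rw [← Nat.mul_assoc, ← Nat.mul_assoc, ← h1]

lemma POdd_icc1 (N d k : ℕ) :
    POdd N d k = ∑ x ∈ Icc 1 k, if Odd x then pterm N d k x else 0 := by
  rw [POdd]; apply Finset.sum_congr rfl; intro x _; rw [pterm]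

lemma podd_rec (N d k : ℕ) (hd1 : 1 ≤ d) (hdN : d + 1 ≤ N) (hk1 : 1 ≤ k) (hkN : k + 1 ≤ N) :
    POdd N d k = ((d:ℝ) / N) * (1 - POdd (N-1) (d-1) (k-1))
      + (((N:ℝ) - d) / N) * POdd (N-1) d (k-1) := by
  have hCN : (0:ℝ) < N.choose k := by exact_mod_cast Nat.choose_pos (by omega)
  have hCB : (0:ℝ) < (N-1).choose (k-1) := by exact_mod_cast Nat.choose_pos (by omega)
  have hNR : (0:ℝ) < N := by exact_mod_cast (by omega : 0 < N)
  have hkR : (0:ℝ) < k := by exact_mod_cast (by omega : 0 < k)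
  have hNB : (N:ℝ) * (N-1).choose (k-1) = k * N.choose k := by
    exact_mod_cast mulchoose N k (by omega) hk1
  have hpt : ∀ x ∈ Icc 1 k,
      (if Odd x then pterm N d k x else 0)
      = ((d:ℝ)/N) * (if Odd x then pterm (N-1) (d-1) (k-1) (x-1) else 0)
      + (((N:ℝ)-d)/N) * (if Odd x ∧ x ≤ k-1 then pterm (N-1) d (k-1) x else 0) := by
    intro x hx
    simp only [Finset.mem_Icc] at hx
    by_cases ho : Odd x
    · simp only [ho, if_pos, true_and]
      have hkey : (k:ℝ) * (d.choose x * (N-d).choose (k-x))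
          = d * ((d-1).choose (x-1) * (N-d).choose (k-x))
          + ((N:ℝ)-d) * (if x < k then ((d.choose x * (N-d-1).choose (k-x-1) : ℕ) : ℝ) else 0) := by
        have h := key_nat N d k x hd1 hdN hx.1 hx.2
        have hc : ((N - d : ℕ) : ℝ) = (N:ℝ) - d := by
          push_cast [Nat.cast_sub (by omega : d ≤ N)]; ring
        by_cases hlt : x < k
        · simp only [hlt, if_pos] at h ⊢
          rw [← hc]; exact_mod_cast h
        · simp only [hlt, if_neg, not_false_iff, mul_zero, add_zero] at h ⊢
          exact_mod_cast h
      rw [pterm, pterm,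
        show (N-1)-(d-1) = N - d from by omega,
        show (k-1)-(x-1) = k - x from by omega]
      by_cases hlt : x ≤ k - 1
      · simp only [hlt, if_pos]
        rw [pterm, show (N-1)-d = N-d-1 from by omega, show (k-1)-x = k-x-1 from by omega]
        have hlt' : x < k := by omega
        simp only [hlt', if_pos] at hkey
        push_cast at hkey ⊢
        field_simp
        linear_combination (N.choose k : ℝ) * hkey
          + ((d.choose x : ℝ) * ((N-d).choose (k-x))) * hNB
      · simp only [hlt, if_neg, not_false_iff, mul_zero, add_zero]
        have hlt' : ¬ x < k := by omega
        simp only [hlt', if_neg, not_false_iff, mul_zero, add_zero] at hkey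
        push_cast at hkey ⊢
        field_simp
        linear_combination (N.choose k : ℝ) * hkey
          + ((d.choose x : ℝ) * ((N-d).choose (k-x))) * hNB
    · simp [ho]
  rw [POdd_icc1, Finset.sum_congr rfl hpt, Finset.sum_add_distrib,
    ← Finset.mul_sum, ← Finset.mul_sum]
  have hS1 : ∑ x ∈ Icc 1 k, (if Odd x then pterm (N-1) (d-1) (k-1) (x-1) else 0)
      = 1 - POdd (N-1) (d-1) (k-1) := by
    rw [← sum_even (N-1) (d-1) (k-1) (by omega) (by omega),
      show Icc 1 k = map (addLeftEmbedding 1) (Icc 0 (k-1)) from by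
        rw [Finset.map_add_left_Icc]; congr 1; omega,
      Finset.sum_map]
    apply Finset.sum_congr rfl
    intro y _
    simp only [addLeftEmbedding_apply]
    rw [show 1 + y - 1 = y from by omega]
    by_cases hy : Odd y
    · simp [hy, Nat.add_comm, Nat.odd_add_one]
    · simp [hy, Nat.add_comm, Nat.odd_add_one]
  have hS2 : ∑ x ∈ Icc 1 k, (if Odd x ∧ x ≤ k-1 then pterm (N-1) d (k-1) x else 0)
      = POdd (N-1) d (k-1) := by
    rw [POdd_eq,
      show Icc 1 k = insert k (Icc 1 (k-1)) from by ext x; simp; omega,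
      show Icc 0 (k-1) = insert 0 (Icc 1 (k-1)) from by ext x; simp; omega,
      Finset.sum_insert (by simp; omega), Finset.sum_insert (by simp)]
    have h0 : (if Odd 0 then pterm (N-1) d (k-1) 0 else 0) = (0:ℝ) := by simp [Nat.odd_iff]
    have hk0 : (if Odd k ∧ k ≤ k-1 then pterm (N-1) d (k-1) k else 0) = (0:ℝ) := by
      have : ¬ (Odd k ∧ k ≤ k - 1) := by rintro ⟨-, h⟩; omega
      simp [this]
    rw [h0, hk0, zero_add, zero_add]
    apply Finset.sum_congr rfl
    intro x hx
    simp only [Finset.mem_Icc] at hx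
    by_cases ho : Odd x
    · simp [ho, hx.2]
    · simp [ho]
  rw [hS1, hS2]
lemma podd_one (N d : ℕ) : POdd N d 1 = (d:ℝ)/N := by
  rw [POdd]
  simp [Finset.Icc_self, Nat.choose_one_right]

lemma choose_two_real (N : ℕ) (hN : 1 ≤ N) : ((N.choose 2 : ℕ) : ℝ) = N * ((N:ℝ)-1) / 2 := by
  have h2 : 2 * N.choose 2 = N * (N - 1) := by
    rw [Nat.choose_two_right]
    have := Nat.even_mul_succ_self (N-1)
    rw [show N - 1 + 1 = N from by omega, Nat.mul_comm (N-1) N] at this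
    obtain ⟨c, hc⟩ := this
    omega
  have h3 : (2:ℝ) * N.choose 2 = N * ((N:ℝ)-1) := by
    have := congrArg (Nat.cast : ℕ → ℝ) h2
    push_cast [Nat.cast_sub hN] at this
    linarith
  linarith

lemma podd_two (N d : ℕ) (hN : 3 ≤ N) (hd : 1 ≤ d) (hdN : d + 1 ≤ N) :
    POdd N d 2 = 2 * d * ((N:ℝ)-d) / ((N:ℝ) * ((N:ℝ)-1)) := by
  have hD : (0:ℝ) < (N:ℝ) * ((N:ℝ)-1) := by
    have : (3:ℝ) ≤ N := by exact_mod_cast hN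
    nlinarith
  rw [POdd, show Finset.Icc 1 2 = {1, 2} from rfl, Finset.sum_insert (by decide),
    Finset.sum_singleton]
  rw [if_pos (by decide : Odd 1), if_neg (by decide : ¬ Odd 2)]
  norm_num [Nat.choose_one_right, choose_two_real N (by omega), Nat.cast_sub (by omega : d ≤ N)]
  rw [div_div_eq_mul_div]
  ring
lemma main_bounds : ∀ k N d : ℕ, 3 ≤ N → 1 ≤ d → d + 1 ≤ N → 1 ≤ k → k + 1 ≤ N →
    (d : ℝ) * ((N:ℝ) - d) / ((N:ℝ) * ((N:ℝ)-1)) ≤ POdd N d k ∧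
    POdd N d k ≤ 1 - (d:ℝ)*((N:ℝ)-d)/((N:ℝ)*((N:ℝ)-1)) := by
  intro k
  induction k using Nat.strong_induction_on with
  | _ k ih =>
  intro N d hN3 hd1 hdN hk1 hkN
  have hNr : (3:ℝ) ≤ N := by exact_mod_cast hN3
  have hdr : (1:ℝ) ≤ d := by exact_mod_cast hd1
  have hdNr : (d:ℝ) + 1 ≤ N := by exact_mod_cast hdN
  have hD : (0:ℝ) < (N:ℝ)*((N:ℝ)-1) := by nlinarith
  have hNp : (0:ℝ) < N := by linarith
  rcases Nat.lt_or_ge k 3 with hk3 | hk3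
  · interval_cases k
    · -- k = 1
      rw [podd_one]
      constructor
      · rw [div_le_div_iff₀ hD hNp]
        nlinarith [mul_nonneg (mul_nonneg (by linarith : (0:ℝ) ≤ d) hNp.le)
          (by linarith : (0:ℝ) ≤ (d:ℝ) - 1)]
      · have h1 : (d:ℝ)*((N:ℝ)-d)/((N:ℝ)*((N:ℝ)-1)) + (d:ℝ)/N ≤ 1 := by
          rw [div_add_div _ _ hD.ne' hNp.ne', div_le_one (by positivity)]
          nlinarith [mul_nonneg (mul_nonneg (by linarith : (0:ℝ) ≤ (N:ℝ) - d)
            (by linarith : (0:ℝ) ≤ (N:ℝ) - (d:ℝ) - 1)) hNp.le]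
        linarith
    · -- k = 2
      set q : ℝ := (d:ℝ)*((N:ℝ)-d)/((N:ℝ)*((N:ℝ)-1)) with hq
      have hP : POdd N d 2 = 2*q := by rw [podd_two N d hN3 hd1 hdN, hq]; ring
      have hq0 : 0 ≤ q := by
        apply div_nonneg _ hD.le; nlinarith
      have hq1 : 3*q ≤ 1 := by
        rw [hq, ← mul_div_assoc, div_le_one hD]
        by_cases hN4 : 4 ≤ N
        · have h4 : (4:ℝ) ≤ N := by exact_mod_cast hN4
          nlinarith [sq_nonneg ((N:ℝ) - 2*d)]
        · have hN3' : N = 3 := by omega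
          subst hN3'
          have hd2 : d ≤ 2 := by omega
          interval_cases d <;> norm_num
      constructor
      · rw [hP]; linarith
      · rw [hP]; linarith
  · -- inductive step, k ≥ 3
    have hN4 : 4 ≤ N := by omega
    have hrec := podd_rec N d k hd1 hdN (by omega) hkN
    set A := POdd (N-1) (d-1) (k-1) with hA
    set B := POdd (N-1) d (k-1) with hB
    have c2 : ((N-1:ℕ):ℝ) = (N:ℝ)-1 := by
      rw [Nat.cast_sub (by omega : 1 ≤ N), Nat.cast_one]
    set qA : ℝ := ((d:ℝ)-1)*((N:ℝ)-d)/(((N:ℝ)-1)*((N:ℝ)-2)) with hqA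
    set qB : ℝ := (d:ℝ)*(((N:ℝ)-1)-d)/(((N:ℝ)-1)*((N:ℝ)-2)) with hqB
    have hAbounds : qA ≤ A ∧ A ≤ 1 - qA := by
      by_cases hd2 : 2 ≤ d
      · have c1 : ((d-1:ℕ):ℝ) = (d:ℝ)-1 := by
          rw [Nat.cast_sub (by omega : 1 ≤ d), Nat.cast_one]
        obtain ⟨l, u⟩ := ih (k-1) (by omega) (N-1) (d-1) (by omega) (by omega)
          (by omega) (by omega) (by omega)
        rw [c1, c2] at l u
        have heq : qA = ((d:ℝ)-1) * (((N:ℝ)-1) - ((d:ℝ)-1)) / (((N:ℝ)-1) * (((N:ℝ)-1)-1)) := by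
          rw [hqA]; ring
        constructor <;> [linarith [l]; linarith [u]]
      · have hd1' : d = 1 := by omega
        subst hd1'
        have h0 : qA = 0 := by rw [hqA]; norm_num
        rw [h0]
        constructor
        · exact POdd_nonneg _ _ _
        · have := POdd_le_one (N-1) 0 (k-1) (Nat.zero_le _) (by omega)
          linarith
    have hBbounds : qB ≤ B ∧ B ≤ 1 - qB := by
      by_cases hd2 : d + 2 ≤ N
      · obtain ⟨l, u⟩ := ih (k-1) (by omega) (N-1) d (by omega) hd1
          (by omega) (by omega) (by omega)
        rw [c2] at l u
        have heq : qB = (d:ℝ) * (((N:ℝ)-1) - (d:ℝ)) / (((N:ℝ)-1) * (((N:ℝ)-1)-1)) := by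
          rw [hqB]; ring
        constructor <;> [linarith [l]; linarith [u]]
      · have hdd : (d:ℝ) = (N:ℝ)-1 := by
          have : d = N - 1 := by omega
          rw [this, c2]
        have h0 : qB = 0 := by rw [hqB, hdd]; ring
        rw [h0]
        constructor
        · exact POdd_nonneg _ _ _
        · have := POdd_le_one (N-1) d (k-1) (by omega) (by omega)
          linarith
    have e1 : (N:ℝ) ≠ 0 := hNp.ne'
    have e2 : (N:ℝ)-1 ≠ 0 := by intro h; nlinarith
    have e3 : (N:ℝ)-2 ≠ 0 := by
      have h4 : (4:ℝ) ≤ N := by exact_mod_cast hN4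
      intro h; nlinarith
    have hkeyid : ((d:ℝ)/N)*qA + (((N:ℝ)-d)/N)*qB = (d:ℝ)*((N:ℝ)-d)/((N:ℝ)*((N:ℝ)-1)) := by
      rw [hqA, hqB]
      field_simp
      ring
    have hsum : (d:ℝ)/N + ((N:ℝ)-d)/N = 1 := by field_simp; ring
    have hdN0 : 0 ≤ (d:ℝ)/N := by positivity
    have hdN1 : 0 ≤ ((N:ℝ)-d)/N := by
      apply div_nonneg _ hNp.le; linarith
    constructor
    · have p1 : ((d:ℝ)/N)*qA ≤ ((d:ℝ)/N)*(1-A) :=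
        mul_le_mul_of_nonneg_left (by linarith [hAbounds.2]) hdN0
      have p2 : (((N:ℝ)-d)/N)*qB ≤ (((N:ℝ)-d)/N)*B :=
        mul_le_mul_of_nonneg_left hBbounds.1 hdN1
      linarith [p1, p2, hrec, hkeyid]
    · have p3 : ((d:ℝ)/N)*(1-A) ≤ ((d:ℝ)/N)*(1-qA) :=
        mul_le_mul_of_nonneg_left (by linarith [hAbounds.1]) hdN0
      have p4 : (((N:ℝ)-d)/N)*B ≤ (((N:ℝ)-d)/N)*(1-qB) :=
        mul_le_mul_of_nonneg_left (by linarith [hBbounds.2]) hdN1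
      have ea : ((d:ℝ)/N)*(1-qA) = (d:ℝ)/N - ((d:ℝ)/N)*qA := by ring
      have eb : (((N:ℝ)-d)/N)*(1-qB) = ((N:ℝ)-d)/N - (((N:ℝ)-d)/N)*qB := by ring
      linarith [p3, p4, ea, eb, hsum, hkeyid, hrec]

theorem hypergeometric_odd_bounds (N d k : ℕ) (hN : 4 ≤ N)
    (hd1 : 1 ≤ d) (hdN : d ≤ N - 1) (hk2 : 2 ≤ k) (hkN : k ≤ N - 1) :
    (d : ℝ) * ((N : ℝ) - d) / ((N : ℝ) * ((N : ℝ) - 1)) ≤ POdd N d k ∧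
    POdd N d k ≤ 1 - (d : ℝ) * ((N : ℝ) - d) / ((N : ℝ) * ((N : ℝ) - 1)) := by
  exact main_bounds k N d (by omega) hd1 (by omega) (by omega) (by omega)
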